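/- Let X be a topological space with exactly one non-isolated point σ, where σ is not a Gδ-point (i.e., {σ} is not a countable intersection of open sets). Then X is a WCF-space if and only if for any two disjoint cozero-sets of X, one of them is clopen. -/
import Mathlib

open Set Classical

theorem stmt17_aux {X : Type*} [TopologicalSpace X] (σ : X)
    (hiso : ∀ x : X, x ≠ σ → IsOpen ({x} : Set X)) (S : Set X) :
    closure S ⊆ S ∪ {σ} := by
  intro x hx
  by_contra hxn
  simp only [mem_union, mem_singleton_iff, not_or] at hxn
  have hxo : IsOpen ({x} : Set X) := hiso x hxn.2
  rcases mem_closure_iff.1 hx {x} hxo rfl with ⟨y, hy1, hy2⟩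
  rw [mem_singleton_iff] at hy1
  exact hxn.1 (hy1 ▸ hy2)


theorem stmt17_zeroGδ {X : Type*} [TopologicalSpace X] (h : C(X, ℝ)) :
    IsGδ (h ⁻¹' {0}) := by
  have : h ⁻¹' {0} = ⋂ n : ℕ, h ⁻¹' (Metric.ball 0 ((n + 1 : ℕ) : ℝ)⁻¹) := by
    ext x
    simp only [Set.mem_preimage, Set.mem_singleton_iff, Set.mem_iInter, Metric.mem_ball,
      Real.dist_eq, sub_zero]
    constructor
    · intro hx n
      rw [hx]
      simp [Nat.cast_add_one_pos]
    · intro hx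
      by_contra hne
      have habs : 0 < |h x| := abs_pos.2 hne
      obtain ⟨n, hn⟩ := exists_nat_gt (|h x|)⁻¹
      have hn1 : (|h x|)⁻¹ < (n + 1 : ℕ) := by
        push_cast; push_cast at hn; linarith
      have := hx n
      have h2 : ((n + 1 : ℕ) : ℝ)⁻¹ < |h x| :=
        (inv_lt_comm₀ (show (0:ℝ) < ((n + 1 : ℕ) : ℝ) by positivity) habs).2 hn1
      linarith
  rw [this]
  exact IsGδ.iInter_of_isOpen fun n => Metric.isOpen_ball.preimage h.continuous

/-- Let `X` have exactly one non-isolated point `σ` which is not a Gδ-point. Then `X`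
is a WCF-space iff for any two disjoint cozero-sets, one of them is clopen. -/
theorem stmt17 {X : Type*} [TopologicalSpace X] [T2Space X] [CompletelyRegularSpace X]
    (σ : X) (hiso : ∀ x : X, x ≠ σ → IsOpen ({x} : Set X))
    (hniso : ¬ IsOpen ({σ} : Set X)) (hGδ : ¬ IsGδ ({σ} : Set X)) :
    (∀ f g : C(X, ℝ), (f ⁻¹' {0})ᶜ ∩ (g ⁻¹' {0})ᶜ = ∅ →
      ∃ h₁ h₂ : C(X, ℝ), (f ⁻¹' {0})ᶜ ⊆ h₁ ⁻¹' {0} ∧ (g ⁻¹' {0})ᶜ ⊆ h₂ ⁻¹' {0} ∧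
        interior (h₁ ⁻¹' {0}) ∩ interior (h₂ ⁻¹' {0}) = ∅) ↔
    (∀ f g : C(X, ℝ), (f ⁻¹' {0})ᶜ ∩ (g ⁻¹' {0})ᶜ = ∅ →
      IsClopen ((f ⁻¹' {0})ᶜ) ∨ IsClopen ((g ⁻¹' {0})ᶜ)) := by
  constructor
  · intro hwcf f g hdisj
    by_contra hcon
    push_neg at hcon
    obtain ⟨hA, hB⟩ := hcon
    set A := (f ⁻¹' {0})ᶜ with hAdef
    set B := (g ⁻¹' {0})ᶜ with hBdef
    have hAo : IsOpen A := (isClosed_singleton.preimage f.continuous).isOpen_compl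
    have hBo : IsOpen B := (isClosed_singleton.preimage g.continuous).isOpen_compl
    have hσA : σ ∈ closure A := by
      by_contra hσ
      refine hA ⟨?_, hAo⟩
      have : closure A ⊆ A := by
        intro x hx
        rcases stmt17_aux σ hiso A hx with h | h
        · exact h
        · exact absurd (h ▸ hx) hσ
      exact isClosed_of_closure_subset this
    have hσB : σ ∈ closure B := by
      by_contra hσ
      refine hB ⟨?_, hBo⟩
      have : closure B ⊆ B := by
        intro x hx
        rcases stmt17_aux σ hiso B hx with h | h
        · exact h
        · exact absurd (h ▸ hx) hσ
      exact isClosed_of_closure_subset this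
    obtain ⟨h₁, h₂, hZ1, hZ2, hint⟩ := hwcf f g hdisj
    have hZ1c : IsClosed (h₁ ⁻¹' {0}) := isClosed_singleton.preimage h₁.continuous
    have hZ2c : IsClosed (h₂ ⁻¹' {0}) := isClosed_singleton.preimage h₂.continuous
    have hσZ1 : σ ∈ h₁ ⁻¹' {0} := hZ1c.closure_subset ((closure_mono hZ1) hσA)
    have hσZ2 : σ ∈ h₂ ⁻¹' {0} := hZ2c.closure_subset ((closure_mono hZ2) hσB)
    have hGδ1 : IsGδ (h₁ ⁻¹' {0} ∩ h₂ ⁻¹' {0}) :=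
      (stmt17_zeroGδ h₁).inter (stmt17_zeroGδ h₂)
    have hne : h₁ ⁻¹' {0} ∩ h₂ ⁻¹' {0} ≠ {σ} := fun h => hGδ (h ▸ hGδ1)
    have hss : ({σ} : Set X) ⊆ h₁ ⁻¹' {0} ∩ h₂ ⁻¹' {0} := by
      intro y hy; rw [mem_singleton_iff] at hy; exact hy ▸ ⟨hσZ1, hσZ2⟩
    obtain ⟨x, hx, hxσ⟩ : ∃ x ∈ h₁ ⁻¹' {0} ∩ h₂ ⁻¹' {0}, x ∉ ({σ} : Set X) :=
      Set.not_subset.1 (fun h => hne (Set.Subset.antisymm h hss))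
    rw [mem_singleton_iff] at hxσ
    have hxo : IsOpen ({x} : Set X) := hiso x hxσ
    have hx1 : x ∈ interior (h₁ ⁻¹' {0}) :=
      interior_maximal (by simpa using hx.1) hxo rfl
    have hx2 : x ∈ interior (h₂ ⁻¹' {0}) :=
      interior_maximal (by simpa using hx.2) hxo rfl
    exact absurd hint (by rw [Set.eq_empty_iff_forall_notMem]; push_neg; exact ⟨x, hx1, hx2⟩)
  · intro hcl f g hdisj
    have build : ∀ (S : Set X), IsClopen S →
        ∃ h : C(X, ℝ), h ⁻¹' {0} = S := by
      intro S hS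
      classical
      refine ⟨⟨fun x => if x ∈ S then 0 else 1, ?_⟩, ?_⟩
      · apply Continuous.if
        · intro a ha
          rw [isClopen_iff_frontier_eq_empty.1 (by simpa using hS)] at ha
          exact absurd ha (Set.notMem_empty a)
        · exact continuous_const
        · exact continuous_const
      · ext x
        by_cases hx : x ∈ S <;> simp [hx]
    rcases hcl f g hdisj with h | h
    · obtain ⟨h₁, hh₁⟩ := build _ h
      obtain ⟨h₂, hh₂⟩ := build _ h.compl
      refine ⟨h₁, h₂, by rw [hh₁], ?_, ?_⟩
      · rw [hh₂]
        intro x hx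
        intro hxA
        exact absurd hdisj (by rw [Set.eq_empty_iff_forall_notMem]; push_neg; exact ⟨x, hxA, hx⟩)
      · rw [hh₁, hh₂]
        have : interior ((f ⁻¹' {0})ᶜ) ∩ interior ((f ⁻¹' {0})ᶜ)ᶜ ⊆
            (f ⁻¹' {0})ᶜ ∩ ((f ⁻¹' {0})ᶜ)ᶜ := inter_subset_inter interior_subset interior_subset
        rw [Set.eq_empty_iff_forall_notMem]
        intro x hx
        exact (this hx).2 (this hx).1
    · obtain ⟨h₂, hh₂⟩ := build _ h
      obtain ⟨h₁, hh₁⟩ := build _ h.compl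
      refine ⟨h₁, h₂, ?_, by rw [hh₂], ?_⟩
      · rw [hh₁]
        intro x hx hxB
        exact absurd hdisj (by rw [Set.eq_empty_iff_forall_notMem]; push_neg; exact ⟨x, hx, hxB⟩)
      · rw [hh₁, hh₂]
        have : interior ((g ⁻¹' {0})ᶜ)ᶜ ∩ interior ((g ⁻¹' {0})ᶜ) ⊆
            ((g ⁻¹' {0})ᶜ)ᶜ ∩ (g ⁻¹' {0})ᶜ := inter_subset_inter interior_subset interior_subset
        rw [Set.eq_empty_iff_forall_notMem]
        intro x hx
        exact (this hx).1 (this hx).2
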